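/- (Gradient with respect to the parameters decomposes as a sum over time steps.) Fix d, m, N ∈ ℕ, a sequence x = (x_0, …, x_N) in ℝ^d with increments Δx_i := x_i − x_{i−1}, and parameters θ ∈ (Matrix (Fin m) (Fin m) ℝ)^d. For 1 ≤ n ≤ N define F_n : (Matrix (Fin m) (Fin m) ℝ)^d → Matrix (Fin m) (Fin m) ℝ by F_n(ϑ) := z_{n−1}(θ) * exp(M_ϑ(Δx_n)) * exp(M_θ(Δx_{n+1})) * ⋯ * exp(M_θ(Δx_N)) (only the n-th step uses the variable parameter ϑ). Let ψ : Matrix (Fin m) (Fin m) ℝ → ℝ be differentiable at z_N(θ). Then for every ξ ∈ (Matrix (Fin m) (Fin m) ℝ)^d: fderiv ℝ (ψ ∘ z_N) θ (ξ) = Σ_{n=1}^N fderiv ℝ (ψ ∘ F_n) θ (ξ). -/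

import Mathlib

attribute [local instance] Matrix.linftyOpNormedAddCommGroup Matrix.linftyOpNormedRing
  Matrix.linftyOpNormedAlgebra

/-- `M_θ v = ∑ j, v j • θ j`, the trainable linear map of the development layer. -/
noncomputable def devLayerM (d m : ℕ) (θ : Fin d → Matrix (Fin m) (Fin m) ℝ)
    (v : Fin d → ℝ) : Matrix (Fin m) (Fin m) ℝ :=
  ∑ j, v j • θ j

/-- The development layer output `z_n (θ) = exp (M_θ Δx_1) * ⋯ * exp (M_θ Δx_n)`
(ordered product, `z_0 = 1`), where `Δx_i = x i - x (i-1)`. -/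
noncomputable def devLayerZ (d m : ℕ) (x : ℕ → Fin d → ℝ) (n : ℕ)
    (θ : Fin d → Matrix (Fin m) (Fin m) ℝ) : Matrix (Fin m) (Fin m) ℝ :=
  ((List.range n).map
    (fun i => NormedSpace.exp (devLayerM d m θ (x (i + 1) - x i)))).prod

/-- The gradient of `ψ ∘ z_N` with respect to the parameters `θ` decomposes as a sum over
the time steps: `(d (ψ ∘ z_N))_θ ξ = ∑_{n=1}^N (d (ψ ∘ F_n))_θ ξ`, where
`F_n (ϑ) = z_{n-1}(θ) * exp (M_ϑ Δx_n) * exp (M_θ Δx_{n+1}) * ⋯ * exp (M_θ Δx_N)`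
uses the variable parameter `ϑ` only in the `n`-th step. -/
theorem statement15 (d m N : ℕ) (x : ℕ → Fin d → ℝ)
    (θ : Fin d → Matrix (Fin m) (Fin m) ℝ)
    (ψ : Matrix (Fin m) (Fin m) ℝ → ℝ)
    (hψ : DifferentiableAt ℝ ψ (devLayerZ d m x N θ))
    (F : ℕ → (Fin d → Matrix (Fin m) (Fin m) ℝ) → Matrix (Fin m) (Fin m) ℝ)
    (hF : ∀ n : ℕ, 1 ≤ n → n ≤ N → ∀ ϑ : Fin d → Matrix (Fin m) (Fin m) ℝ,
      F n ϑ = devLayerZ d m x (n - 1) θ * NormedSpace.exp (devLayerM d m ϑ (x n - x (n - 1))) *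
        ((List.range (N - n)).map
          (fun j => NormedSpace.exp (devLayerM d m θ (x (n + 1 + j) - x (n + j))))).prod) :
    ∀ ξ : Fin d → Matrix (Fin m) (Fin m) ℝ,
      fderiv ℝ (ψ ∘ devLayerZ d m x N) θ ξ =
        ∑ n ∈ Finset.Icc 1 N, fderiv ℝ (ψ ∘ F n) θ ξ := by
  classical
  intro ξ
  -- the individual step maps
  set g : ℕ → (Fin d → (Matrix (Fin m) (Fin m) ℝ)) → (Matrix (Fin m) (Fin m) ℝ) :=
    fun i ϑ => NormedSpace.exp (devLayerM d m ϑ (x (i + 1) - x i)) with hg_def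
  have hgdiff : ∀ i, DifferentiableAt ℝ (g i) θ := by
    intro i
    have h1 : Differentiable ℝ (fun ϑ : Fin d → (Matrix (Fin m) (Fin m) ℝ) => devLayerM d m ϑ (x (i + 1) - x i)) := by
      unfold devLayerM
      exact Differentiable.fun_sum fun j _ =>
        ((ContinuousLinearMap.proj (R := ℝ) (φ := fun _ : Fin d => (Matrix (Fin m) (Fin m) ℝ)) j).differentiable).const_smul
          ((x (i + 1) - x i) j)
    have h2 : DifferentiableAt ℝ (NormedSpace.exp : (Matrix (Fin m) (Fin m) ℝ) → (Matrix (Fin m) (Fin m) ℝ))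
        (devLayerM d m θ (x (i + 1) - x i)) := by
      refine (NormedSpace.analyticAt_exp_of_mem_ball _ ?_).differentiableAt
      rw [NormedSpace.expSeries_radius_eq_top]
      exact edist_lt_top _ _
    exact h2.comp θ (h1 θ)
  set D : ℕ → (Fin d → (Matrix (Fin m) (Fin m) ℝ)) →L[ℝ] (Matrix (Fin m) (Fin m) ℝ) := fun i => fderiv ℝ (g i) θ with hD_def
  have hg : ∀ i, HasFDerivAt (g i) (D i) θ := fun i => (hgdiff i).hasFDerivAt
  -- right tail products
  set R : ℕ → ℕ → (Matrix (Fin m) (Fin m) ℝ) := fun i k => ((List.range (k - (i + 1))).map (fun j => g (i + 1 + j) θ)).prod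
    with hR_def
  have hZsucc : ∀ k (ϑ : Fin d → (Matrix (Fin m) (Fin m) ℝ)),
      devLayerZ d m x (k + 1) ϑ = devLayerZ d m x k ϑ * g k ϑ := by
    intro k ϑ
    simp [devLayerZ, List.range_succ, hg_def]
  have hRsucc : ∀ i k, i < k → R i (k + 1) = R i k * g k θ := by
    intro i k hik
    have h1 : k + 1 - (i + 1) = (k - (i + 1)) + 1 := by omega
    have h2 : i + 1 + (k - (i + 1)) = k := by omega
    simp only [hR_def, h1, List.range_succ, List.map_append, List.prod_append, List.map_cons,
      List.map_nil, List.prod_cons, List.prod_nil, mul_one, h2]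
  -- the summand linear maps
  set T : ℕ → ℕ → (Fin d → (Matrix (Fin m) (Fin m) ℝ)) →L[ℝ] (Matrix (Fin m) (Fin m) ℝ) := fun k n =>
    ((ContinuousLinearMap.mul ℝ (Matrix (Fin m) (Fin m) ℝ)).flip (R n k)).comp
      (((ContinuousLinearMap.mul ℝ (Matrix (Fin m) (Fin m) ℝ)) (devLayerZ d m x n θ)).comp (D n)) with hT_def
  have hTapp : ∀ k n (v : Fin d → (Matrix (Fin m) (Fin m) ℝ)), T k n v = devLayerZ d m x n θ * D n v * R n k := by
    intro k n v; rw [hT_def]; rfl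
  -- derivative of the full product
  have key : ∀ k, HasFDerivAt (devLayerZ d m x k) (∑ n ∈ Finset.range k, T k n) θ := by
    intro k
    induction k with
    | zero =>
        have : devLayerZ d m x 0 = fun _ : Fin d → (Matrix (Fin m) (Fin m) ℝ) => (1 : (Matrix (Fin m) (Fin m) ℝ)) := by
          funext ϑ; simp [devLayerZ]
        rw [this]
        simpa using hasFDerivAt_const (1 : (Matrix (Fin m) (Fin m) ℝ)) θ
    | succ k ih =>
        have hmul := ih.mul' (hg k)
        have heq : (fun ϑ => devLayerZ d m x k ϑ * g k ϑ) = devLayerZ d m x (k + 1) := by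
          funext ϑ; rw [hZsucc]
        rw [show devLayerZ d m x k * g k = devLayerZ d m x (k + 1) from heq] at hmul
        refine hmul.congr_fderiv (Eq.symm ?_)
        ext v : 1
        simp only [ContinuousLinearMap.add_apply, ContinuousLinearMap.smul_apply,
          ContinuousLinearMap.smulRight_apply, ContinuousLinearMap.sum_apply, smul_eq_mul,
          op_smul_eq_mul]
        rw [Finset.sum_range_succ]
        have h1 : ∀ n ∈ Finset.range k, T (k + 1) n v = T k n v * g k θ := by
          intro n hn
          rw [hTapp, hTapp, hRsucc n k (Finset.mem_range.mp hn), mul_assoc, mul_assoc, mul_assoc]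
        rw [Finset.sum_congr rfl h1, ← Finset.sum_mul]
        have h2 : T (k + 1) k v = devLayerZ d m x k θ * D k v := by
          rw [hTapp]
          have : R k (k + 1) = 1 := by simp [hR_def]
          rw [this, mul_one]
        rw [h2, add_comm]
        show _ = devLayerZ d m x k θ * D k v + (∑ n ∈ Finset.range k, T k n) v * g k θ
        rw [ContinuousLinearMap.sum_apply]
  -- splitting the product at position i
  have hsplit : ∀ i k, i < k →
      devLayerZ d m x k θ = devLayerZ d m x i θ * g i θ * R i k := by
    intro i k
    induction k with
    | zero => omega
    | succ k ih =>
        intro hik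
        rcases Nat.lt_succ_iff_lt_or_eq.mp hik with h | h
        · rw [hZsucc, ih h, hRsucc i k h]; simp [mul_assoc]
        · subst h
          rw [hZsucc]
          have : R i (i + 1) = 1 := by simp [hR_def]
          rw [this, mul_one]
  -- description of F n for n = i + 1
  have hFdesc : ∀ i, i < N →
      F (i + 1) = fun ϑ => devLayerZ d m x i θ * g i ϑ * R i N := by
    intro i hi
    funext ϑ
    rw [hF (i + 1) (Nat.le_add_left 1 i) hi ϑ]
    have h1 : i + 1 - 1 = i := by omega
    rw [h1]
    show _ * g i ϑ * _ = _
    congr 1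
    show List.prod _ = List.prod _
    congr 1
    apply List.map_congr_left
    intro j _
    show NormedSpace.exp (devLayerM d m θ (x (i + 1 + 1 + j) - x (i + 1 + j))) = g (i + 1 + j) θ
    have e1 : i + 1 + 1 + j = i + 1 + j + 1 := by omega
    rw [e1]
  -- derivative of F (i+1)
  have hFderiv : ∀ i, i < N → HasFDerivAt (F (i + 1)) (T N i) θ := by
    intro i hi
    rw [hFdesc i hi]
    have h := ((hg i).const_mul (devLayerZ d m x i θ)).mul_const' (R i N)
    exact h.congr_fderiv (by ext v : 1; exact (hTapp N i v).symm)
  -- chain rule on both sides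
  have hψ' : HasFDerivAt ψ (fderiv ℝ ψ (devLayerZ d m x N θ)) (devLayerZ d m x N θ) :=
    hψ.hasFDerivAt
  have hLHS : fderiv ℝ (ψ ∘ devLayerZ d m x N) θ =
      (fderiv ℝ ψ (devLayerZ d m x N θ)).comp (∑ n ∈ Finset.range N, T N n) :=
    (hψ'.comp θ (key N)).fderiv
  have hFval : ∀ i, i < N → F (i + 1) θ = devLayerZ d m x N θ := by
    intro i hi
    rw [hFdesc i hi]
    exact (hsplit i N hi).symm
  have hRHS : ∀ i, i < N → fderiv ℝ (ψ ∘ F (i + 1)) θ =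
      (fderiv ℝ ψ (devLayerZ d m x N θ)).comp (T N i) := by
    intro i hi
    have h1 : HasFDerivAt ψ (fderiv ℝ ψ (devLayerZ d m x N θ)) (F (i + 1) θ) := by
      rw [hFval i hi]; exact hψ'
    exact (h1.comp θ (hFderiv i hi)).fderiv
  rw [hLHS]
  rw [show Finset.Icc 1 N = Finset.Ico 1 (N + 1) by rw [Finset.Ico_add_one_right_eq_Icc],
    Finset.sum_Ico_eq_sum_range]
  simp only [Nat.add_sub_cancel]
  have : ∀ i ∈ Finset.range N, fderiv ℝ (ψ ∘ F (1 + i)) θ ξ =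
      (fderiv ℝ ψ (devLayerZ d m x N θ)) (T N i ξ) := by
    intro i hi
    rw [add_comm 1 i, hRHS i (Finset.mem_range.mp hi)]
    rfl
  rw [Finset.sum_congr rfl this]
  simp [map_sum]
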